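/- Let Ω be a positive definite (1+k)×(1+k) matrix partitioned conformably with (β, δ^{(s)}, δ^{(−s)}) as [[1, Ω_{βδ^{(s)}}, Ω_{βδ^{(−s)}}], [Ω_{δ^{(s)}β}, Ω_{δ^{(s)}δ^{(s)}}, Ω_{δ^{(s)}δ^{(−s)}}], [Ω_{δ^{(−s)}β}, Ω_{δ^{(−s)}δ^{(s)}}, Ω_{δ^{(−s)}δ^{(−s)}}]], and let Ω^{−1} be partitioned the same way with blocks denoted by superscripts. Then Ω^{βδ^{(s)}} − Ω^{βδ^{(−s)}}(Ω^{δ^{(−s)}δ^{(−s)}})^{−1}Ω^{δ^{(−s)}δ^{(s)}} = −(Ω^{ββ} − Ω^{βδ^{(−s)}}(Ω^{δ^{(−s)}δ^{(−s)}})^{−1}Ω^{δ^{(−s)}β}) · Ω_{βδ^{(s)}}Ω_{δ^{(s)}δ^{(s)}}^{−1}. -/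

import Mathlib

open Matrix


lemma posDef_submatrix_inj {n m : Type*} [Fintype n] [Fintype m] [DecidableEq m] [DecidableEq n]
    {M : Matrix n n ℝ} (hM : M.PosDef) {e : m → n} (he : Function.Injective e) :
    (M.submatrix e e).PosDef := by
  rw [Matrix.posDef_iff_dotProduct_mulVec]
  constructor
  · ext i j
    simpa [Matrix.conjTranspose_apply] using congrFun (congrFun hM.1 (e i)) (e j)
  · intro x hx
    set B : Matrix n m ℝ := (1 : Matrix n n ℝ).submatrix id e with hB
    have hMe : M.submatrix e e = Bᴴ * M * B := by
      rw [hB]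
      rw [(by simp : M = 1 * M * 1), Matrix.submatrix_mul (he₂ := Function.bijective_id),
        Matrix.submatrix_mul (he₂ := Function.bijective_id), Matrix.submatrix_id_id]
      congr 1
      ext i j
      simp [Matrix.conjTranspose_apply, Matrix.one_apply, eq_comm]
  -- quadratic form transfer
    have hquad : star x ⬝ᵥ (M.submatrix e e) *ᵥ x = star (B *ᵥ x) ⬝ᵥ M *ᵥ (B *ᵥ x) := by
      rw [hMe, ← Matrix.mulVec_mulVec, ← Matrix.mulVec_mulVec, Matrix.dotProduct_mulVec,
        Matrix.vecMul_conjTranspose]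
      simp
    have hy : B *ᵥ x ≠ 0 := by
      obtain ⟨i, hi⟩ := Function.ne_iff.mp hx
      intro h0
      apply hi
      have := congrFun h0 (e i)
      simp only [hB, Matrix.mulVec, dotProduct, Matrix.submatrix_apply, id_eq,
        Matrix.one_apply, Pi.zero_apply, ite_mul, one_mul, zero_mul] at this
      simp only [he.eq_iff] at this
      simpa [Finset.sum_ite_eq] using this
    rw [hquad]
    exact hM.dotProduct_mulVec_pos hy

lemma inv_blocks_aux {n p : Type*} [Fintype n] [Fintype p] [DecidableEq n] [DecidableEq p]
    {X : Matrix (n ⊕ p) (n ⊕ p) ℝ} (hX : X.PosDef) :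
    (X⁻¹).toBlocks₁₁ =
        (X.toBlocks₁₁ - X.toBlocks₁₂ * (X.toBlocks₂₂)⁻¹ * X.toBlocks₂₁)⁻¹ ∧
      (X⁻¹).toBlocks₁₂ = -((X⁻¹).toBlocks₁₁ * X.toBlocks₁₂ * (X.toBlocks₂₂)⁻¹) ∧
      IsUnit (X.toBlocks₁₁ - X.toBlocks₁₂ * (X.toBlocks₂₂)⁻¹ * X.toBlocks₂₁) := by
  set A := X.toBlocks₁₁ with hA
  set B := X.toBlocks₁₂ with hB
  set C := X.toBlocks₂₁ with hC
  set D := X.toBlocks₂₂ with hD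
  have hDpd : D.PosDef :=
    posDef_submatrix_inj hX (Sum.inr_injective : Function.Injective (Sum.inr : p → n ⊕ p))
  haveI iX : Invertible X := X.invertibleOfIsUnitDet hX.det_pos.ne'.isUnit
  haveI iD : Invertible D := D.invertibleOfIsUnitDet hDpd.det_pos.ne'.isUnit
  haveI iFB : Invertible (fromBlocks A B C D) :=
    iX.copy' _ _ (fromBlocks_toBlocks X) rfl
  haveI iS : Invertible (A - B * ⅟D * C) := invertibleOfFromBlocks₂₂Invertible A B C D
  have hDinv : (⅟D : Matrix p p ℝ) = D⁻¹ := invOf_eq_nonsing_inv D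
  have hS' : A - B * ⅟D * C = A - B * D⁻¹ * C := by rw [hDinv]
  have hXinv : X⁻¹ =
      fromBlocks (⅟(A - B * ⅟D * C)) (-(⅟(A - B * ⅟D * C) * B * ⅟D))
        (-(⅟D * C * ⅟(A - B * ⅟D * C))) (⅟D + ⅟D * C * ⅟(A - B * ⅟D * C) * B * ⅟D) := by
    calc X⁻¹ = (fromBlocks A B C D)⁻¹ := by rw [fromBlocks_toBlocks]
      _ = ⅟(fromBlocks A B C D) := (invOf_eq_nonsing_inv _).symm
      _ = _ := invOf_fromBlocks₂₂_eq A B C D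
  have h11 : (X⁻¹).toBlocks₁₁ = (A - B * D⁻¹ * C)⁻¹ := by
    rw [hXinv, toBlocks_fromBlocks₁₁, invOf_eq_nonsing_inv, hS']
  refine ⟨h11, ?_, ?_⟩
  · rw [hXinv, toBlocks_fromBlocks₁₂, toBlocks_fromBlocks₁₁, invOf_eq_nonsing_inv, hDinv]
  · rw [← hS']
    exact isUnit_of_invertible _

lemma schur_inv_aux {n p : Type*} [Fintype n] [Fintype p] [DecidableEq n] [DecidableEq p]
    {X : Matrix (n ⊕ p) (n ⊕ p) ℝ} (hX : X.PosDef) :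
    (X⁻¹).toBlocks₁₁ - (X⁻¹).toBlocks₁₂ * ((X⁻¹).toBlocks₂₂)⁻¹ * (X⁻¹).toBlocks₂₁ =
      (X.toBlocks₁₁)⁻¹ := by
  have hY : (X⁻¹).PosDef := hX.inv
  obtain ⟨h1, -, h3⟩ := inv_blocks_aux hY
  have hXX : X⁻¹⁻¹ = X := Matrix.nonsing_inv_nonsing_inv X hX.det_pos.ne'.isUnit
  rw [hXX] at h1
  rw [h1, Matrix.nonsing_inv_nonsing_inv _ ((Matrix.isUnit_iff_isUnit_det _).mp h3)]

/-- for a positive definite `(1+k)×(1+k)` matrix `Ω` partitioned conformably with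
`(β, δ⁽ˢ⁾, δ⁽⁻ˢ⁾)` (index type `Unit ⊕ m ⊕ l`, with `Ω_ββ = 1`), and `Θ = Ω⁻¹` partitioned the
same way,
`Θ^{βδ⁽ˢ⁾} - Θ^{βδ⁽⁻ˢ⁾} (Θ^{δ⁽⁻ˢ⁾δ⁽⁻ˢ⁾})⁻¹ Θ^{δ⁽⁻ˢ⁾δ⁽ˢ⁾}
  = -(Θ^{ββ} - Θ^{βδ⁽⁻ˢ⁾} (Θ^{δ⁽⁻ˢ⁾δ⁽⁻ˢ⁾})⁻¹ Θ^{δ⁽⁻ˢ⁾β}) · Ω_{βδ⁽ˢ⁾} Ω_{δ⁽ˢ⁾δ⁽ˢ⁾}⁻¹`. -/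
theorem stmt8 (m l : Type*) [Fintype m] [Fintype l] [DecidableEq m] [DecidableEq l]
    (Ω : Matrix (Unit ⊕ m ⊕ l) (Unit ⊕ m ⊕ l) ℝ) (hpd : Ω.PosDef)
    (h11 : Ω (Sum.inl ()) (Sum.inl ()) = 1)
    (Θ : Matrix (Unit ⊕ m ⊕ l) (Unit ⊕ m ⊕ l) ℝ) (hΘ : Θ = Ω⁻¹) :
    Θ.submatrix (Sum.inl : Unit → Unit ⊕ m ⊕ l) (Sum.inr ∘ Sum.inl) -
        Θ.submatrix (Sum.inl : Unit → Unit ⊕ m ⊕ l) (Sum.inr ∘ Sum.inr) *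
          (Θ.submatrix (Sum.inr ∘ Sum.inr : l → Unit ⊕ m ⊕ l) (Sum.inr ∘ Sum.inr))⁻¹ *
          Θ.submatrix (Sum.inr ∘ Sum.inr : l → Unit ⊕ m ⊕ l) (Sum.inr ∘ Sum.inl) =
      -((Θ.submatrix (Sum.inl : Unit → Unit ⊕ m ⊕ l) Sum.inl -
          Θ.submatrix (Sum.inl : Unit → Unit ⊕ m ⊕ l) (Sum.inr ∘ Sum.inr) *
            (Θ.submatrix (Sum.inr ∘ Sum.inr : l → Unit ⊕ m ⊕ l) (Sum.inr ∘ Sum.inr))⁻¹ *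
            Θ.submatrix (Sum.inr ∘ Sum.inr : l → Unit ⊕ m ⊕ l) Sum.inl) *
        (Ω.submatrix (Sum.inl : Unit → Unit ⊕ m ⊕ l) (Sum.inr ∘ Sum.inl) *
          (Ω.submatrix (Sum.inr ∘ Sum.inl : m → Unit ⊕ m ⊕ l) (Sum.inr ∘ Sum.inl))⁻¹)) := by
  clear h11
  set e : (Unit ⊕ m) ⊕ l ≃ Unit ⊕ m ⊕ l := Equiv.sumAssoc Unit m l with he
  set g : Unit ⊕ m → Unit ⊕ m ⊕ l := Sum.elim Sum.inl (Sum.inr ∘ Sum.inl) with hgdef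
  set rr : l → Unit ⊕ m ⊕ l := Sum.inr ∘ Sum.inr with hrr
  have hginj : Function.Injective g := by
    rintro (u | a) (v | b) h <;> simp [hgdef] at h <;> simp [h]
  have hΩ' : (Ω.submatrix e e).PosDef := posDef_submatrix_inj hpd e.injective
  have key := schur_inv_aux hΩ'
  rw [inv_submatrix_equiv, ← hΘ] at key
  have hge : ∀ i, e (Sum.inl i) = g i := by rintro (u | a) <;> rfl
  have t11 : (Θ.submatrix e e).toBlocks₁₁ = Θ.submatrix g g := by
    ext i j; simp [Matrix.toBlocks₁₁, hge]
  have t12 : (Θ.submatrix e e).toBlocks₁₂ = Θ.submatrix g rr := by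
    ext i j; simp [Matrix.toBlocks₁₂, hge, hrr, he]
    exact congrArg (fun x => Θ x (Sum.inr (Sum.inr j))) (hge i)
  have t21 : (Θ.submatrix e e).toBlocks₂₁ = Θ.submatrix rr g := by
    ext i j; simp [Matrix.toBlocks₂₁, hge, hrr, he]
    exact congrArg (fun x => Θ (Sum.inr (Sum.inr i)) x) (hge j)
  have t22 : (Θ.submatrix e e).toBlocks₂₂ = Θ.submatrix rr rr := by
    ext i j; simp [Matrix.toBlocks₂₂, hrr, he]
  have o11 : (Ω.submatrix e e).toBlocks₁₁ = Ω.submatrix g g := by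
    ext i j; simp [Matrix.toBlocks₁₁, hge]
  rw [t11, t12, t21, t22, o11] at key
  -- key : Θ.submatrix g g - Θ.submatrix g rr * (Θ.submatrix rr rr)⁻¹ * Θ.submatrix rr g
  --        = (Ω.submatrix g g)⁻¹
  have keyLR := congrArg
    (fun M : Matrix (Unit ⊕ m) (Unit ⊕ m) ℝ =>
      M.submatrix (Sum.inl : Unit → Unit ⊕ m) (Sum.inr : m → Unit ⊕ m)) key
  have key11 := congrArg
    (fun M : Matrix (Unit ⊕ m) (Unit ⊕ m) ℝ =>
      M.submatrix (Sum.inl : Unit → Unit ⊕ m) (Sum.inl : Unit → Unit ⊕ m)) key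
  have hc1 : g ∘ (Sum.inl : Unit → Unit ⊕ m) = (Sum.inl : Unit → Unit ⊕ m ⊕ l) := rfl
  have hc2 : g ∘ (Sum.inr : m → Unit ⊕ m) = Sum.inr ∘ Sum.inl := rfl
  simp only [Matrix.submatrix_sub, Pi.sub_apply, hc1, hc2,
    Matrix.submatrix_mul (e₂ := (id : l → l)) (he₂ := Function.bijective_id),
    Matrix.submatrix_submatrix, Matrix.submatrix_id_id, Function.comp_id,
    Sum.elim_comp_inl, Sum.elim_comp_inr] at keyLR key11
  have hPpd : (Ω.submatrix g g).PosDef := posDef_submatrix_inj hpd hginj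
  obtain ⟨-, h2, -⟩ := inv_blocks_aux hPpd
  have tb12 : ((Ω.submatrix g g)⁻¹).toBlocks₁₂ =
      ((Ω.submatrix g g)⁻¹).submatrix (Sum.inl : Unit → Unit ⊕ m) Sum.inr := rfl
  have tb11 : ((Ω.submatrix g g)⁻¹).toBlocks₁₁ =
      ((Ω.submatrix g g)⁻¹).submatrix (Sum.inl : Unit → Unit ⊕ m) Sum.inl := rfl
  have ob12 : (Ω.submatrix g g).toBlocks₁₂ =
      Ω.submatrix (Sum.inl : Unit → Unit ⊕ m ⊕ l) (Sum.inr ∘ Sum.inl) := by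
    ext i j; simp [Matrix.toBlocks₁₂, hgdef]
  have ob22 : (Ω.submatrix g g).toBlocks₂₂ =
      Ω.submatrix (Sum.inr ∘ Sum.inl : m → Unit ⊕ m ⊕ l) (Sum.inr ∘ Sum.inl) := by
    ext i j; simp [Matrix.toBlocks₂₂, hgdef]
  rw [tb12, tb11, ob12, ob22, ← keyLR, ← key11] at h2
  rw [h2, Matrix.mul_assoc]
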